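/- Define u : ℝ² → ℝ² by u(x,y) = (sgn(x) x⁴, x⁴). Then u is C², the gradient Du has rank at most 1 everywhere, and u solves [[Du]]^⊥ Δu = 0 on all of ℝ², yet the image u(ℝ²) = {(t, |t|) : t ∈ ℝ} is not contained in a single affine line of ℝ². -/

import Mathlib

open Matrix Filter

lemma hasDerivAt_abs_mul_pow (m : ℕ) (x : ℝ) :
    HasDerivAt (fun y : ℝ => |y| * y ^ (m + 1)) ((m + 2) * (|x| * x ^ m)) x := by
  rcases lt_trichotomy x 0 with hx | rfl | hx
  · have h1 : HasDerivAt (fun y : ℝ => -(y ^ (m + 2))) (-((m + 2 : ℕ) * x ^ (m + 1))) x :=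
      (hasDerivAt_pow (m + 2) x).neg
    have h2 : (fun y : ℝ => |y| * y ^ (m + 1)) =ᶠ[nhds x] fun y => -(y ^ (m + 2)) := by
      filter_upwards [Iio_mem_nhds hx] with y hy
      rw [abs_of_neg hy]; ring
    have h3 := h1.congr_of_eventuallyEq h2
    refine h3.congr_deriv ?_
    rw [abs_of_neg hx]; push_cast; ring
  · rw [hasDerivAt_iff_tendsto_slope]
    have heq : (fun y : ℝ => |y| * y ^ m) =ᶠ[nhdsWithin 0 {(0:ℝ)}ᶜ]
        slope (fun y : ℝ => |y| * y ^ (m + 1)) 0 := by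
      filter_upwards [self_mem_nhdsWithin] with y hy
      have hy' : y ≠ 0 := hy
      rw [slope_def_field]
      field_simp
      ring
    have htend : Filter.Tendsto (fun y : ℝ => |y| * y ^ m) (nhdsWithin 0 {(0:ℝ)}ᶜ)
        (nhds (((m:ℝ) + 2) * (|(0:ℝ)| * (0:ℝ) ^ m))) := by
      have : Filter.Tendsto (fun y : ℝ => |y| * y ^ m) (nhds 0) (nhds (|(0:ℝ)| * (0:ℝ) ^ m)) :=
        (continuous_abs.mul (continuous_pow m)).tendsto 0
      simp only [abs_zero, zero_mul, mul_zero]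
      simpa using this.mono_left nhdsWithin_le_nhds
    exact htend.congr' heq
  · have h1 : HasDerivAt (fun y : ℝ => y ^ (m + 2)) ((m + 2 : ℕ) * x ^ (m + 1)) x :=
      hasDerivAt_pow (m + 2) x
    have h2 : (fun y : ℝ => |y| * y ^ (m + 1)) =ᶠ[nhds x] fun y => y ^ (m + 2) := by
      filter_upwards [Ioi_mem_nhds hx] with y hy
      rw [abs_of_pos hy]; ring
    have h3 := h1.congr_of_eventuallyEq h2
    refine h3.congr_deriv ?_
    rw [abs_of_pos hx]; push_cast; ring

lemma hd_f (x : ℝ) : HasDerivAt (fun y : ℝ => |y| * y ^ 3) (4 * (|x| * x ^ 2)) x := by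
  have := hasDerivAt_abs_mul_pow 2 x
  norm_num at this ⊢
  convert this using 1

lemma hd_f' (x : ℝ) : HasDerivAt (fun y : ℝ => 4 * (|y| * y ^ 2)) (12 * (|x| * x)) x := by
  have := (hasDerivAt_abs_mul_pow 1 x).const_mul 4
  norm_num at this ⊢
  refine this.congr_deriv ?_
  ring

lemma contDiff_f : ContDiff ℝ 2 (fun y : ℝ => |y| * y ^ 3) := by
  rw [show (2 : WithTop ℕ∞) = 1 + 1 from rfl, contDiff_succ_iff_deriv]
  refine ⟨fun x => (hd_f x).differentiableAt, by simp, ?_⟩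
  have hderiv : deriv (fun y : ℝ => |y| * y ^ 3) = fun y : ℝ => 4 * (|y| * y ^ 2) :=
    funext fun x => (hd_f x).deriv
  rw [hderiv, contDiff_one_iff_deriv]
  refine ⟨fun x => (hd_f' x).differentiableAt, ?_⟩
  have hderiv2 : deriv (fun y : ℝ => 4 * (|y| * y ^ 2)) = fun y : ℝ => 12 * (|y| * y) :=
    funext fun x => (hd_f' x).deriv
  rw [hderiv2]
  fun_prop

noncomputable def V (a b : ℝ) : EuclideanSpace ℝ (Fin 2) := WithLp.toLp 2 ![a, b]

@[simp] lemma V_zero (a b : ℝ) : V a b 0 = a := rfl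
@[simp] lemma V_one (a b : ℝ) : V a b 1 = b := rfl

lemma hasDerivAt_V (f g : ℝ → ℝ) (f' g' : ℝ) (t : ℝ)
    (hf : HasDerivAt f f' t) (hg : HasDerivAt g g' t) :
    HasDerivAt (fun s : ℝ => V (f s) (g s)) (V f' g') t := by
  have h0 : HasDerivAt (fun s : ℝ => (![f s, g s] : Fin 2 → ℝ)) ![f', g'] t := by
    rw [hasDerivAt_pi]
    intro i
    fin_cases i
    · simpa using hf
    · simpa using hg
  exact ((PiLp.continuousLinearEquiv 2 ℝ (fun _ : Fin 2 => ℝ)).symm.toContinuousLinearMap.hasFDerivAt).comp_hasDerivAt t h0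


/-- The orthogonal projection of ℝ^N onto the orthogonal complement of the range of X. -/
noncomputable def perpProj {N n : ℕ} (X : Matrix (Fin N) (Fin n) ℝ)
    (w : EuclideanSpace ℝ (Fin N)) : EuclideanSpace ℝ (Fin N) :=
  (Submodule.orthogonalProjection (LinearMap.range (Matrix.toEuclideanLin X))ᗮ w :
    EuclideanSpace ℝ (Fin N))

/-- The gradient matrix Du(x). -/
noncomputable def gradMatrix {N n : ℕ} (u : EuclideanSpace ℝ (Fin n) → EuclideanSpace ℝ (Fin N))
    (x : EuclideanSpace ℝ (Fin n)) : Matrix (Fin N) (Fin n) ℝ :=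
  Matrix.of fun α i => fderiv ℝ u x (EuclideanSpace.single i 1) α

/-- The Laplacian Δu(x). -/
noncomputable def lapl {N n : ℕ} (u : EuclideanSpace ℝ (Fin n) → EuclideanSpace ℝ (Fin N))
    (x : EuclideanSpace ℝ (Fin n)) : EuclideanSpace ℝ (Fin N) :=
  ∑ i, fderiv ℝ (fun y => fderiv ℝ u y (EuclideanSpace.single i 1)) x (EuclideanSpace.single i 1)

lemma fderiv_comp_proj (w : ℝ → EuclideanSpace ℝ (Fin 2)) (w' : EuclideanSpace ℝ (Fin 2))
    (p : EuclideanSpace ℝ (Fin 2)) (h : HasDerivAt w w' (p 0)) (v : EuclideanSpace ℝ (Fin 2)) :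
    fderiv ℝ (fun q => w (q 0)) p v = v 0 • w' := by
  have h2 : HasFDerivAt (fun q : EuclideanSpace ℝ (Fin 2) => w (q 0))
      ((ContinuousLinearMap.smulRight (1 : ℝ →L[ℝ] ℝ) w').comp
        (PiLp.proj 2 (fun _ : Fin 2 => ℝ) 0)) p :=
    h.hasFDerivAt.comp p (PiLp.hasFDerivAt_apply (𝕜 := ℝ) 2 p 0)
  rw [h2.fderiv]
  simp

lemma u_hasDerivAt (t : ℝ) :
    HasDerivAt (fun s : ℝ => V (|s| * s ^ 3) (s ^ 4)) (V (4 * (|t| * t ^ 2)) (4 * t ^ 3)) t := by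
  refine hasDerivAt_V _ _ _ _ _ (hd_f t) ?_
  simpa using hasDerivAt_pow 4 t

lemma Fd_hasDerivAt (t : ℝ) :
    HasDerivAt (fun s : ℝ => V (4 * (|s| * s ^ 2)) (4 * s ^ 3))
      (V (12 * (|t| * t)) (12 * t ^ 2)) t := by
  refine hasDerivAt_V _ _ _ _ _ (hd_f' t) ?_
  have := (hasDerivAt_pow 3 t).const_mul (4 : ℝ)
  refine this.congr_deriv ?_
  push_cast; ring

lemma u_fderiv_apply (u : EuclideanSpace ℝ (Fin 2) → EuclideanSpace ℝ (Fin 2))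
    (hu : u = fun p => (WithLp.toLp 2 ![|p 0| * (p 0) ^ 3, (p 0) ^ 4] : EuclideanSpace ℝ (Fin 2)))
    (p v : EuclideanSpace ℝ (Fin 2)) :
    fderiv ℝ u p v = v 0 • V (4 * (|p 0| * (p 0) ^ 2)) (4 * (p 0) ^ 3) := by
  have hrw : u = fun q : EuclideanSpace ℝ (Fin 2) => V (|q 0| * (q 0) ^ 3) ((q 0) ^ 4) := by
    rw [hu]; rfl
  rw [hrw]
  exact fderiv_comp_proj (fun t => V (|t| * t ^ 3) (t ^ 4)) _ p (u_hasDerivAt (p 0)) v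

lemma rank_le_one_u (u : EuclideanSpace ℝ (Fin 2) → EuclideanSpace ℝ (Fin 2))
    (hu : u = fun p => (WithLp.toLp 2 ![|p 0| * (p 0) ^ 3, (p 0) ^ 4] : EuclideanSpace ℝ (Fin 2)))
    (p : EuclideanSpace ℝ (Fin 2)) : (gradMatrix u p).rank ≤ 1 := by
  have hX : gradMatrix u p =
      (Matrix.of fun (α : Fin 2) (_ : Fin 1) =>
        V (4 * (|p 0| * (p 0) ^ 2)) (4 * (p 0) ^ 3) α) *
      (Matrix.of fun (_ : Fin 1) (i : Fin 2) =>
        (EuclideanSpace.single i (1:ℝ) : EuclideanSpace ℝ (Fin 2)) 0) := by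
    ext α i
    rw [Matrix.mul_apply, Fin.sum_univ_one]
    simp only [gradMatrix, Matrix.of_apply, u_fderiv_apply u hu, PiLp.smul_apply, smul_eq_mul]
    ring
  calc (gradMatrix u p).rank ≤ (Matrix.of fun (α : Fin 2) (_ : Fin 1) =>
        V (4 * (|p 0| * (p 0) ^ 2)) (4 * (p 0) ^ 3) α).rank := by
        rw [hX]; exact Matrix.rank_mul_le_left _ _
    _ ≤ 1 := (Matrix.rank_le_card_width _).trans (by simp)

lemma lapl_eq (u : EuclideanSpace ℝ (Fin 2) → EuclideanSpace ℝ (Fin 2))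
    (hu : u = fun p => (WithLp.toLp 2 ![|p 0| * (p 0) ^ 3, (p 0) ^ 4] : EuclideanSpace ℝ (Fin 2)))
    (p : EuclideanSpace ℝ (Fin 2)) :
    lapl u p = V (12 * (|p 0| * p 0)) (12 * (p 0) ^ 2) := by
  have hfun0 : (fun y => fderiv ℝ u y (EuclideanSpace.single 0 1)) =
      fun y : EuclideanSpace ℝ (Fin 2) => V (4 * (|y 0| * (y 0) ^ 2)) (4 * (y 0) ^ 3) := by
    funext y; rw [u_fderiv_apply u hu]; simp [EuclideanSpace.single_apply]
  have hfun1 : (fun y => fderiv ℝ u y (EuclideanSpace.single 1 1)) =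
      fun _ : EuclideanSpace ℝ (Fin 2) => (0 : EuclideanSpace ℝ (Fin 2)) := by
    funext y; rw [u_fderiv_apply u hu]; simp [EuclideanSpace.single_apply]
  have h0 : fderiv ℝ (fun y : EuclideanSpace ℝ (Fin 2) =>
        V (4 * (|y 0| * (y 0) ^ 2)) (4 * (y 0) ^ 3)) p (EuclideanSpace.single 0 1) =
      (EuclideanSpace.single (0 : Fin 2) (1:ℝ) : EuclideanSpace ℝ (Fin 2)) 0 •
        V (12 * (|p 0| * p 0)) (12 * (p 0) ^ 2) :=
    fderiv_comp_proj (fun t => V (4 * (|t| * t ^ 2)) (4 * t ^ 3)) _ p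
      (Fd_hasDerivAt (p 0)) _
  rw [lapl, Fin.sum_univ_two, hfun0, hfun1, h0]
  simp [EuclideanSpace.single_apply]

lemma perp_zero (u : EuclideanSpace ℝ (Fin 2) → EuclideanSpace ℝ (Fin 2))
    (hu : u = fun p => (WithLp.toLp 2 ![|p 0| * (p 0) ^ 3, (p 0) ^ 4] : EuclideanSpace ℝ (Fin 2)))
    (p : EuclideanSpace ℝ (Fin 2)) : perpProj (gradMatrix u p) (lapl u p) = 0 := by
  have hmem : lapl u p ∈ LinearMap.range (Matrix.toEuclideanLin (gradMatrix u p)) := by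
    by_cases hx : p 0 = 0
    · have h0 : lapl u p = 0 := by
        rw [lapl_eq u hu, hx]
        ext j
        fin_cases j <;> simp [V]
      rw [h0]; exact zero_mem _
    · refine ⟨(3 / p 0) • EuclideanSpace.single 0 1, ?_⟩
      rw [lapl_eq u hu]
      ext j
      simp only [Matrix.toEuclideanLin_apply, PiLp.toLp_apply, Matrix.mulVec,
        dotProduct, Fin.sum_univ_two, PiLp.smul_apply,
        EuclideanSpace.single_apply, smul_eq_mul, gradMatrix, Matrix.of_apply,
        u_fderiv_apply u hu]
      fin_cases j <;> simp <;> field_simp <;> ring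
  have hproj := Submodule.orthogonalProjectionOnto_orthogonal_apply_eq_zero hmem
  simp [perpProj, hproj]

lemma contDiff_u (u : EuclideanSpace ℝ (Fin 2) → EuclideanSpace ℝ (Fin 2))
    (hu : u = fun p => (WithLp.toLp 2 ![|p 0| * (p 0) ^ 3, (p 0) ^ 4] : EuclideanSpace ℝ (Fin 2))) :
    ContDiff ℝ 2 u := by
  rw [hu, contDiff_euclidean]
  intro i
  have hproj : ContDiff ℝ 2 (fun p : EuclideanSpace ℝ (Fin 2) => p 0) :=
    (PiLp.proj (𝕜 := ℝ) 2 (fun _ : Fin 2 => ℝ) 0).contDiff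
  fin_cases i
  · simp only [Matrix.cons_val_zero]
    exact contDiff_f.comp hproj
  · simp only [Matrix.cons_val_one, Matrix.head_cons, Matrix.cons_val_zero]
    exact hproj.pow 4

lemma range_eq (u : EuclideanSpace ℝ (Fin 2) → EuclideanSpace ℝ (Fin 2))
    (hu : u = fun p => (WithLp.toLp 2 ![|p 0| * (p 0) ^ 3, (p 0) ^ 4] : EuclideanSpace ℝ (Fin 2))) :
    Set.range u = Set.range (fun t : ℝ => (WithLp.toLp 2 ![t, |t|] : EuclideanSpace ℝ (Fin 2))) := by
  rw [hu]; ext w; simp only [Set.mem_range]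
  constructor
  · rintro ⟨p, rfl⟩
    refine ⟨|p 0| * (p 0) ^ 3, ?_⟩
    have h4 : |(|p 0| * (p 0) ^ 3)| = (p 0) ^ 4 := by
      have habs : |p 0| ^ 4 = (p 0) ^ 4 := by
        rw [← abs_pow]; exact abs_of_nonneg (by positivity)
      calc |(|p 0| * (p 0) ^ 3)| = |p 0| * |p 0| ^ 3 := by rw [abs_mul, abs_abs, abs_pow]
        _ = |p 0| ^ 4 := by ring
        _ = (p 0) ^ 4 := habs
    ext j
    fin_cases j <;> simp [h4]
  · rintro ⟨t, rfl⟩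
    rcases le_or_gt 0 t with ht | ht
    · set s : ℝ := t ^ ((1:ℝ)/4) with hs
      have hsnn : (0:ℝ) ≤ s := Real.rpow_nonneg ht _
      have hs4 : s ^ (4:ℕ) = t := by
        rw [hs, ← Real.rpow_natCast (t ^ ((1:ℝ)/4)) 4, ← Real.rpow_mul ht]
        norm_num
      refine ⟨(WithLp.toLp 2 ![s, 0] : EuclideanSpace ℝ (Fin 2)), ?_⟩
      ext j
      fin_cases j
      · simp only [Fin.zero_eta, Fin.isValue, Matrix.cons_val_zero]
        rw [abs_of_nonneg hsnn]
        linear_combination hs4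
      · simp only [Fin.mk_one, Fin.isValue, Matrix.cons_val_one, Matrix.head_cons, Matrix.cons_val_zero]
        rw [abs_of_nonneg ht]
        exact hs4
    · set s : ℝ := (-t) ^ ((1:ℝ)/4) with hs
      have hsnn : (0:ℝ) ≤ s := Real.rpow_nonneg (by linarith) _
      have hs4 : s ^ (4:ℕ) = -t := by
        rw [hs, ← Real.rpow_natCast ((-t) ^ ((1:ℝ)/4)) 4, ← Real.rpow_mul (by linarith)]
        norm_num
      refine ⟨(WithLp.toLp 2 ![-s, 0] : EuclideanSpace ℝ (Fin 2)), ?_⟩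
      ext j
      fin_cases j
      · simp only [Fin.zero_eta, Fin.isValue, Matrix.cons_val_zero]
        rw [abs_neg, abs_of_nonneg hsnn]
        linear_combination -hs4
      · simp only [Fin.mk_one, Fin.isValue, Matrix.cons_val_one, Matrix.head_cons, Matrix.cons_val_zero]
        rw [abs_of_neg ht]
        linear_combination hs4

/-- the map u(x,y) = (sgn(x)x⁴, x⁴) (note sgn(x)x⁴ = |x|·x³) is C²,
has rank-one gradient, solves [[Du]]^⊥Δu = 0 on ℝ², its image is {(t,|t|) : t ∈ ℝ},
yet its image is not contained in a single affine line. -/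
theorem stmt7 (u : EuclideanSpace ℝ (Fin 2) → EuclideanSpace ℝ (Fin 2))
    (hu : u = fun p => (WithLp.toLp 2 ![|p 0| * (p 0) ^ 3, (p 0) ^ 4] : EuclideanSpace ℝ (Fin 2))) :
    ContDiff ℝ 2 u ∧
    (∀ p, (gradMatrix u p).rank ≤ 1) ∧
    (∀ p, perpProj (gradMatrix u p) (lapl u p) = 0) ∧
    Set.range u = Set.range (fun t : ℝ => (WithLp.toLp 2 ![t, |t|] : EuclideanSpace ℝ (Fin 2))) ∧
    ¬ ∃ c v : EuclideanSpace ℝ (Fin 2), ∀ p, ∃ s : ℝ, u p = c + s • v := by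
  refine ⟨contDiff_u u hu, fun p => rank_le_one_u u hu p, fun p => perp_zero u hu p,
    range_eq u hu, ?_⟩
  rintro ⟨c, v, h⟩
  have key : ∀ a s : ℝ, u (WithLp.toLp 2 ![a, 0]) = c + s • v →
      |a| * a ^ 3 = c 0 + s * v 0 ∧ a ^ 4 = c 1 + s * v 1 := by
    intro a s hs
    constructor
    · have h0 := congrArg (fun w : EuclideanSpace ℝ (Fin 2) => w 0) hs
      simpa [hu, PiLp.add_apply, PiLp.smul_apply, smul_eq_mul] using h0
    · have h1 := congrArg (fun w : EuclideanSpace ℝ (Fin 2) => w 1) hs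
      simpa [hu, PiLp.add_apply, PiLp.smul_apply, smul_eq_mul] using h1
  obtain ⟨s0, hs0⟩ := h (WithLp.toLp 2 ![0, 0])
  obtain ⟨s1, hs1⟩ := h (WithLp.toLp 2 ![1, 0])
  obtain ⟨s2, hs2⟩ := h (WithLp.toLp 2 ![-1, 0])
  obtain ⟨e0, e0'⟩ := key 0 s0 hs0
  obtain ⟨e1, e1'⟩ := key 1 s1 hs1
  obtain ⟨e2, e2'⟩ := key (-1) s2 hs2
  norm_num at e0 e0' e1 e1' e2 e2'
  have q1 : s1 * v 0 - s0 * v 0 = 1 := by linarith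
  have q2 : s1 * v 1 - s0 * v 1 = 1 := by linarith
  have q3 : s2 * v 0 - s0 * v 0 = -1 := by linarith
  have q4 : s2 * v 1 - s0 * v 1 = 1 := by linarith
  have contra : (1:ℝ) = -1 := by
    calc (1:ℝ) = (s1 * v 0 - s0 * v 0) * (s2 * v 1 - s0 * v 1) := by rw [q1, q4]; ring
      _ = (s1 * v 1 - s0 * v 1) * (s2 * v 0 - s0 * v 0) := by ring
      _ = -1 := by rw [q2, q3]; ring
  linarith
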